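/- arXiv:1011.1082 — 2 statements merged into one kernel-verified Lean document; each statement's English description precedes it below -/
import Mathlib

section
/- General lower bound criterion: let {P_n} be a sequence of probability measures on a Polish space X, X° ⊂ X, and suppose for each x ∈ X° there is a sequence of probability measures {Q_n^x} converging weakly to δ_x with limsup_n (1/n) Ent(Q_n^x | P_n) ≤ I°(x) for some I° : X° → [0,+∞]. Then for every open set O ⊂ X, liminf_n (1/n) log P_n(O) ≥ − inf_{x ∈ O ∩ X°} I°(x). -/
open MeasureTheory Filter Set
open scoped ENNReal BoundedContinuousFunction

section Aux

variable {α : Type*} [MeasurableSpace α]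


lemma my_gibbs (μ ν : Measure α) [IsProbabilityMeasure μ] [IsProbabilityMeasure ν]
    (hμν : μ ≪ ν) (hint : Integrable (llr μ ν) μ) :
    0 ≤ ∫ x, llr μ ν x ∂μ := by
  set g : α → ℝ := fun x => Real.exp (- llr μ ν x) with hg
  have hgmeas : Measurable g := (measurable_llr μ ν).neg.exp
  have hlint : ∫⁻ x, ENNReal.ofReal (g x) ∂μ ≤ 1 := by
    rw [← lintegral_rnDeriv_mul hμν hgmeas.ennreal_ofReal.aemeasurable]
    calc ∫⁻ x, μ.rnDeriv ν x * ENNReal.ofReal (g x) ∂ν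
        ≤ ∫⁻ _, 1 ∂ν := by
          refine lintegral_mono_ae ?_
          filter_upwards [Measure.rnDeriv_lt_top μ ν] with x hx
          rcases eq_or_ne (μ.rnDeriv ν x) 0 with h0 | h0
          · simp [h0]
          · have hpos : 0 < (μ.rnDeriv ν x).toReal := ENNReal.toReal_pos h0 hx.ne
            have hgx : g x = ((μ.rnDeriv ν x).toReal)⁻¹ := by
              rw [hg]; simp only [llr]
              rw [Real.exp_neg, Real.exp_log hpos]
            rw [hgx, ENNReal.ofReal_inv_of_pos hpos, ENNReal.ofReal_toReal hx.ne,
              ENNReal.mul_inv_cancel h0 hx.ne]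
      _ = 1 := by simp
  have hgint : Integrable g μ := by
    refine ⟨hgmeas.aestronglyMeasurable, ?_⟩
    rw [hasFiniteIntegral_def]
    calc ∫⁻ x, ‖g x‖₊ ∂μ = ∫⁻ x, ENNReal.ofReal (g x) ∂μ := by
          refine lintegral_congr fun x => ?_
          exact Real.enorm_eq_ofReal (Real.exp_pos _).le
      _ ≤ 1 := hlint
      _ < ⊤ := by simp
  have hgle : ∫ x, g x ∂μ ≤ 1 := by
    rw [integral_eq_lintegral_of_nonneg_ae (Filter.Eventually.of_forall fun x => (Real.exp_pos _).le)
      hgmeas.aestronglyMeasurable]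
    calc (∫⁻ x, ENNReal.ofReal (g x) ∂μ).toReal ≤ (1 : ℝ≥0∞).toReal :=
          ENNReal.toReal_mono ENNReal.one_ne_top hlint
      _ = 1 := by simp
  have hpt : ∀ x, - llr μ ν x ≤ g x - 1 := fun x => by
    have := Real.add_one_le_exp (- llr μ ν x); simp only [hg]; linarith
  have hmono := integral_mono hint.neg (hgint.sub (integrable_const 1)) hpt
  simp only [Pi.neg_apply, Pi.sub_apply] at hmono
  rw [integral_neg, integral_sub hgint (integrable_const 1)] at hmono
  simp only [integral_const, measureReal_def, measure_univ, ENNReal.toReal_one, smul_eq_mul, one_mul] at hmono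
  linarith

lemma my_entropy_ineq (μ ν : Measure α) [IsProbabilityMeasure μ] [IsProbabilityMeasure ν]
    (hμν : μ ≪ ν) (hint : Integrable (llr μ ν) μ) {A : Set α} (hA : MeasurableSet A)
    (hν0 : ν A ≠ 0) :
    (μ A).toReal * (- Real.log ((ν A).toReal)) ≤ (∫ x, llr μ ν x ∂μ) + Real.log 2 := by
  set p := (ν A).toReal with hp
  have hp_pos : 0 < p := ENNReal.toReal_pos hν0 (measure_ne_top ν A)
  have hp_le : p ≤ 1 := by
    rw [hp]
    calc (ν A).toReal ≤ (1 : ℝ≥0∞).toReal :=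
        ENNReal.toReal_mono ENNReal.one_ne_top prob_le_one
      _ = 1 := by simp
  set t := - Real.log p with ht
  set f : α → ℝ := A.indicator (fun _ => t) with hf
  have hfint : Integrable f μ := (integrable_const t).indicator hA
  have hexp_eq : (fun x => Real.exp (f x))
      = fun x => A.indicator (fun _ => Real.exp t - 1) x + 1 := by
    funext y; by_cases hy : y ∈ A <;> simp [hf, hy]
  have hexpint : Integrable (fun x => Real.exp (f x)) ν := by
    rw [hexp_eq]; exact ((integrable_const _).indicator hA).add (integrable_const 1)
  have hZ : ∫ x, Real.exp (f x) ∂ν = 2 - p := by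
    rw [hexp_eq, integral_add ((integrable_const _).indicator hA) (integrable_const 1)]
    rw [integral_indicator_const _ hA]
    simp only [integral_const, measureReal_def, measure_univ, ENNReal.toReal_one, smul_eq_mul, one_mul, ← hp]
    have he : Real.exp t = p⁻¹ := by rw [ht, Real.exp_neg, Real.exp_log hp_pos]
    rw [he]; field_simp; ring
  have htilted : IsProbabilityMeasure (ν.tilted f) := isProbabilityMeasure_tilted hexpint
  have hac : μ ≪ ν.tilted f := hμν.trans (absolutelyContinuous_tilted hexpint)
  have hint' : Integrable (llr μ (ν.tilted f)) μ :=
    integrable_llr_tilted_right hμν hfint hint hexpint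
  have h0 := my_gibbs μ (ν.tilted f) hac hint'
  rw [integral_llr_tilted_right hμν hfint hexpint hint] at h0
  have hfQ : ∫ x, f x ∂μ = (μ A).toReal * t := by
    rw [hf, integral_indicator_const _ hA]; simp [smul_eq_mul, measureReal_def]
  rw [hfQ, hZ] at h0
  have hlog2 : Real.log (2 - p) ≤ Real.log 2 :=
    Real.log_le_log (by linarith) (by linarith)
  linarith

end Aux

theorem stmt16 {X : Type*} [MetricSpace X] [CompleteSpace X]
    [TopologicalSpace.SeparableSpace X] [MeasurableSpace X] [BorelSpace X]
    (P : ℕ → Measure X) (hP : ∀ n, IsProbabilityMeasure (P n))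
    (X0 : Set X) (I : X → ℝ≥0∞)
    (h : ∀ x ∈ X0, ∃ Q : ℕ → Measure X,
      (∀ n, IsProbabilityMeasure (Q n)) ∧
      (∀ n, Q n ≪ P n) ∧
      (∀ n, Integrable (fun ω => Real.log (((Q n).rnDeriv (P n) ω).toReal)) (Q n)) ∧
      (∀ f : X →ᵇ ℝ, Tendsto (fun n => ∫ y, f y ∂(Q n)) atTop (nhds (f x))) ∧
      limsup (fun n : ℕ => ENNReal.ofReal
          ((1 / (n : ℝ)) *
            ∫ ω, Real.log (((Q n).rnDeriv (P n) ω).toReal) ∂(Q n))) atTop ≤ I x) :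
    ∀ O : Set X, IsOpen O → ∀ x ∈ O ∩ X0,
      (-(I x : EReal)) ≤
        liminf (fun n : ℕ =>
          (((1 / (n : ℝ)) * Real.log ((P n O).toReal) : ℝ) : EReal)) atTop := by
  intro O hO x hx
  obtain ⟨Q, hQprob, hQP, hInt, hweak, hlimsup⟩ := h x hx.2
  haveI := fun n => hP n
  haveI := fun n => hQprob n
  by_cases hItop : I x = ⊤
  · simp [hItop]
  set M := (I x).toReal with hMdef
  have hM0 : 0 ≤ M := ENNReal.toReal_nonneg
  set E : ℕ → ℝ := fun n => ∫ ω, Real.log (((Q n).rnDeriv (P n) ω).toReal) ∂(Q n) with hE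
  -- bump function
  obtain ⟨r, hr_pos, hball⟩ := Metric.isOpen_iff.mp hO x hx.1
  set g₀ : C(X, ℝ) := ⟨fun y => max 0 (1 - dist y x / r), by fun_prop⟩ with hg₀
  have hg₀mem : ∀ y, 0 ≤ g₀ y ∧ g₀ y ≤ 1 := by
    intro y
    refine ⟨le_max_left _ _, max_le (by norm_num) ?_⟩
    have : 0 ≤ dist y x / r := div_nonneg dist_nonneg hr_pos.le
    linarith
  set g : X →ᵇ ℝ := BoundedContinuousFunction.mkOfBound g₀ 1 (by
    intro a b
    rw [Real.dist_eq, abs_le]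
    constructor <;> [skip; skip] <;>
      (obtain ⟨h1, h2⟩ := hg₀mem a; obtain ⟨h3, h4⟩ := hg₀mem b; linarith)) with hgdef
  have hgx : g x = 1 := by
    show max 0 (1 - dist x x / r) = 1
    simp [dist_self]
  have hgle : ∀ n, ∫ y, g y ∂(Q n) ≤ (Q n O).toReal := by
    intro n
    have hpt : ∀ y, g y ≤ O.indicator (fun _ => (1 : ℝ)) y := by
      intro y
      by_cases hy : y ∈ O
      · rw [Set.indicator_of_mem hy]
        exact (hg₀mem y).2
      · rw [Set.indicator_of_notMem hy]
        have hyb : y ∉ Metric.ball x r := fun hmem => hy (hball hmem)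
        have hd : r ≤ dist y x := by simpa [Metric.mem_ball, not_lt] using hyb
        have : 1 ≤ dist y x / r := (one_le_div hr_pos).mpr hd
        exact max_le le_rfl (by linarith)
    have := integral_mono (g.integrable (Q n)) ((integrable_const (1:ℝ)).indicator hO.measurableSet) hpt
    rwa [integral_indicator_const _ hO.measurableSet, smul_eq_mul, mul_one] at this
  have hq1 : ∀ n, (Q n O).toReal ≤ 1 := by
    intro n
    calc (Q n O).toReal ≤ (1 : ℝ≥0∞).toReal :=
        ENNReal.toReal_mono ENNReal.one_ne_top prob_le_one
      _ = 1 := by simp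
  -- main estimate
  have key : ∀ s : ℝ, s < -M →
      (s : EReal) ≤ liminf (fun n : ℕ =>
        (((1 / (n : ℝ)) * Real.log ((P n O).toReal) : ℝ) : EReal)) atTop := by
    intro s hs
    -- choose ε
    have hcont : Tendsto (fun ε : ℝ => (M + 2*ε)/(1-ε)) (nhdsWithin 0 (Ioi 0)) (nhds M) := by
      have h1 : ContinuousAt (fun ε : ℝ => (M + 2*ε)/(1-ε)) 0 := by
        apply ContinuousAt.div (by fun_prop) (by fun_prop) (by norm_num)
      have h2 := h1.tendsto
      simp only [mul_zero, add_zero, sub_zero, div_one] at h2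
      exact h2.mono_left nhdsWithin_le_nhds
    obtain ⟨ε, hεlt, hεpos, hεhalf⟩ :=
      ((hcont.eventually_lt_const (by linarith : M < -s)).and
        (eventually_mem_nhdsWithin.and
          ((eventually_lt_nhds (by norm_num : (0:ℝ) < 1/2)).filter_mono
            nhdsWithin_le_nhds))).exists
    rw [Set.mem_Ioi] at hεpos
    -- eventually entropy bound
    have hIx : ENNReal.ofReal M = I x := ENNReal.ofReal_toReal hItop
    have hlt : limsup (fun n : ℕ => ENNReal.ofReal ((1 / (n : ℝ)) * E n)) atTop
        < ENNReal.ofReal (M + ε) := by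
      refine lt_of_le_of_lt hlimsup ?_
      rw [← hIx]
      exact (ENNReal.ofReal_lt_ofReal_iff (by linarith)).mpr (by linarith)
    have hev1 : ∀ᶠ n : ℕ in atTop, (1 / (n : ℝ)) * E n < M + ε := by
      have hev0 := eventually_lt_of_limsup_lt
        (u := fun n : ℕ => ENNReal.ofReal ((1 / (n : ℝ)) * E n)) hlt
      filter_upwards [hev0] with n hn
      exact (ENNReal.ofReal_lt_ofReal_iff (by linarith)).mp hn
    -- eventually Q n O close to 1
    have hev2 : ∀ᶠ n in atTop, 1 - ε < (Q n O).toReal := by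
      have h1 : Tendsto (fun n => ∫ y, g y ∂(Q n)) atTop (nhds 1) := by
        rw [← hgx]; exact hweak g
      filter_upwards [h1.eventually_const_lt (by linarith : 1 - ε < 1)] with n hn
      exact lt_of_lt_of_le hn (hgle n)
    have hfinal : ∀ᶠ n : ℕ in atTop, (s : EReal) ≤
        (((1 / (n : ℝ)) * Real.log ((P n O).toReal) : ℝ) : EReal) := by
      filter_upwards [hev1, hev2, eventually_ge_atTop 1,
        eventually_ge_atTop ⌈Real.log 2 / ε⌉₊] with n h1 h2 hn1 hnlog
      have hn_pos : (0 : ℝ) < n := by exact_mod_cast hn1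
      have hlog : Real.log 2 ≤ n * ε := by
        have := Nat.ceil_le.mp hnlog
        calc Real.log 2 = (Real.log 2 / ε) * ε := by field_simp
          _ ≤ n * ε := by
            apply mul_le_mul_of_nonneg_right _ hεpos.le
            exact_mod_cast this
      have hPO : P n O ≠ 0 := by
        intro h0
        have hq0 : Q n O = 0 := hQP n h0
        rw [hq0] at h2
        simp at h2
        linarith
      have hkey := my_entropy_ineq (Q n) (P n) (hQP n) (hInt n) hO.measurableSet hPO
      have hkey' : (Q n O).toReal * (- Real.log ((P n O).toReal)) ≤ E n + Real.log 2 := by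
        convert hkey using 2
        rfl
      set q := (Q n O).toReal
      set lp := Real.log ((P n O).toReal) with hlp
      have hq_pos : 0 < q := by linarith
      have hq_le : q ≤ 1 := hq1 n
      have hE' : E n < (M + ε) * n := by
        rw [one_div_mul_eq_div] at h1
        exact (div_lt_iff₀ hn_pos).mp h1
      have hs_pos : 0 < -s := by
        have h01 : 0 ≤ (M + 2*ε)/(1-ε) := div_nonneg (by linarith) (by linarith)
        linarith
      have hεlt' : M + 2*ε < (-s) * (1 - ε) := (div_lt_iff₀ (by linarith)).mp hεlt
      have c1 : q * (-lp) < (M + 2*ε) * n := by nlinarith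
      have c2 : (M + 2*ε) * n < (-s) * (1-ε) * n := by nlinarith
      have c3 : (-s) * (1-ε) * n ≤ q * ((-s) * n) := by
        nlinarith [mul_nonneg (mul_nonneg hs_pos.le hn_pos.le) (show (0:ℝ) ≤ q - (1-ε) by linarith)]
      have c4 : q * (-lp) < q * ((-s) * n) := by linarith
      have c5 : -lp < (-s) * n := (mul_lt_mul_iff_right₀ hq_pos).mp c4
      have c6 : s * n < lp := by linarith
      rw [EReal.coe_le_coe_iff]
      have hinv : 0 < 1 / (n : ℝ) := by positivity
      have := mul_lt_mul_of_pos_left c6 hinv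
      have heq : 1 / (n : ℝ) * (s * n) = s := by field_simp
      linarith
    calc (s : EReal) = liminf (fun _ : ℕ => (s : EReal)) atTop := (liminf_const _).symm
      _ ≤ _ := liminf_le_liminf hfinal
  have hcoe : (I x : EReal) = ((M : ℝ) : EReal) := by
    rw [← ENNReal.ofReal_toReal hItop, EReal.coe_ennreal_ofReal, max_eq_left hM0]
  rw [hcoe, ← EReal.coe_neg]
  refine le_of_forall_lt fun c hc => ?_
  obtain ⟨y, hcy, hy⟩ := EReal.exists_between_coe_real hc
  exact lt_of_lt_of_le hcy (key y (by exact_mod_cast hy))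
end

section
/- Entropy lower bound for events: for probability measures Q ≪ P on a measurable space and a measurable set A with Q(A) ≥ 1/2, one has log P(A) ≥ −(Ent(Q|P) + log 2)/Q(A). In particular, if Q(A) → 1 along a sequence, then liminf (1/n) log P_n(A_n) ≥ −limsup (1/n)Ent(Q_n|P_n). -/
open MeasureTheory Filter Set

private lemma aux_log2 {t : ℝ} (ht : 0 ≤ t) :
    t - 1/2 ≤ t * Real.log 2 + t * Real.log t := by
  rcases eq_or_lt_of_le ht with h | h
  · simp [← h]
  · have h2t : (0:ℝ) < 2 * t := by linarith
    have hlog : Real.log (1/(2*t)) ≤ 1/(2*t) - 1 :=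
      Real.log_le_sub_one_of_pos (by positivity)
    rw [Real.log_div one_ne_zero (ne_of_gt h2t), Real.log_one,
      Real.log_mul two_ne_zero (ne_of_gt h)] at hlog
    have hmul := mul_le_mul_of_nonneg_left hlog ht
    have hkey : t * (1/(2*t) - 1) = 1/2 - t := by field_simp
    nlinarith [hmul, hkey]

private lemma jensen_llr {Ω : Type*} [MeasurableSpace Ω] (P Q : Measure Ω)
    [IsProbabilityMeasure P] [IsProbabilityMeasure Q] (hQP : Q ≪ P)
    (hint : Integrable (llr Q P) Q) {S : Set Ω} (hS : MeasurableSet S) :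
    (Q S).toReal * (Real.log (Q S).toReal - Real.log (P S).toReal)
      ≤ ∫ ω in S, llr Q P ω ∂Q := by
  by_cases hQS : Q S = 0
  · simp [Measure.restrict_eq_zero.mpr hQS, hQS]
  · have hPS : P S ≠ 0 := fun h => hQS (hQP h)
    have hqs : 0 < (Q S).toReal := ENNReal.toReal_pos hQS (measure_ne_top Q S)
    have hpa : 0 < (P S).toReal := ENNReal.toReal_pos hPS (measure_ne_top P S)
    set qs := (Q S).toReal with hqs'
    set pa := (P S).toReal with hpa'
    set c := qs / pa with hc
    have hcpos : 0 < c := div_pos hqs hpa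
    set F : Ω → ℝ := fun ω => ((Q.rnDeriv P ω)⁻¹).toReal with hF
    have hFmeas : Measurable F := (Measure.measurable_rnDeriv Q P).inv.ennreal_toReal
    have hFnonneg : ∀ ω, 0 ≤ F ω := fun ω => ENNReal.toReal_nonneg
    -- lintegral bound
    have hlint : ∫⁻ ω in S, (Q.rnDeriv P ω)⁻¹ ∂Q ≤ P S := by
      rw [← setLIntegral_rnDeriv_mul hQP (f := fun ω => (Q.rnDeriv P ω)⁻¹)
        (Measure.measurable_rnDeriv Q P).inv.aemeasurable hS]
      calc ∫⁻ ω in S, Q.rnDeriv P ω * (Q.rnDeriv P ω)⁻¹ ∂P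
          ≤ ∫⁻ _ in S, 1 ∂P := lintegral_mono fun ω => ENNReal.mul_inv_le_one _
        _ = P S := setLIntegral_one S
    have hFint : Integrable F (Q.restrict S) := by
      refine ⟨hFmeas.aestronglyMeasurable, ?_⟩
      rw [hasFiniteIntegral_iff_norm]
      calc ∫⁻ ω in S, ENNReal.ofReal ‖F ω‖ ∂Q
          ≤ ∫⁻ ω in S, (Q.rnDeriv P ω)⁻¹ ∂Q := by
            refine lintegral_mono fun ω => ?_
            rw [Real.norm_of_nonneg (hFnonneg ω)]
            exact ENNReal.ofReal_toReal_le
        _ ≤ P S := hlint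
        _ < ⊤ := measure_lt_top P S
    have hFval : ∫ ω in S, F ω ∂Q ≤ pa := by
      rw [integral_eq_lintegral_of_nonneg_ae (ae_of_all _ hFnonneg)
        hFmeas.aestronglyMeasurable]
      refine ENNReal.toReal_mono (measure_ne_top P S) ?_
      refine le_trans (lintegral_mono fun ω => ?_) hlint
      exact ENNReal.ofReal_toReal_le
    -- pointwise inequality
    have hae : ∀ᵐ ω ∂Q, 1 - c * F ω ≤ llr Q P ω - Real.log c := by
      filter_upwards [Measure.rnDeriv_pos hQP, hQP.ae_le (Measure.rnDeriv_lt_top Q P)]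
        with ω h0 htop
      have hg : 0 < (Q.rnDeriv P ω).toReal := ENNReal.toReal_pos h0.ne' htop.ne
      have hFw : F ω = ((Q.rnDeriv P ω).toReal)⁻¹ := ENNReal.toReal_inv _
      have hlog : Real.log (c / (Q.rnDeriv P ω).toReal)
          ≤ c / (Q.rnDeriv P ω).toReal - 1 :=
        Real.log_le_sub_one_of_pos (by positivity)
      rw [Real.log_div (ne_of_gt hcpos) (ne_of_gt hg)] at hlog
      have hllr : llr Q P ω = Real.log ((Q.rnDeriv P ω).toReal) := rfl
      rw [hllr, hFw]
      have hdiv : c / (Q.rnDeriv P ω).toReal = c * ((Q.rnDeriv P ω).toReal)⁻¹ :=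
        div_eq_mul_inv _ _
      linarith [hlog, hdiv.le, hdiv.ge]
    have hmono : ∫ ω in S, (1 - c * F ω) ∂Q ≤ ∫ ω in S, (llr Q P ω - Real.log c) ∂Q :=
      integral_mono_ae ((integrable_const 1).sub (hFint.const_mul c))
        (hint.restrict.sub (integrable_const _)) (ae_restrict_of_ae hae)
    have hL : ∫ ω in S, (1 - c * F ω) ∂Q = qs - c * ∫ ω in S, F ω ∂Q := by
      rw [integral_sub (integrable_const 1) (hFint.const_mul c), integral_const,
        integral_const_mul, measureReal_restrict_apply_univ]
      simp [hqs', measureReal_def]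
    have hR : ∫ ω in S, (llr Q P ω - Real.log c) ∂Q
        = (∫ ω in S, llr Q P ω ∂Q) - qs * Real.log c := by
      rw [integral_sub hint.restrict (integrable_const _), integral_const,
        measureReal_restrict_apply_univ]
      simp [hqs', smul_eq_mul, measureReal_def]
    have hcp : c * pa = qs := div_mul_cancel₀ _ (ne_of_gt hpa)
    have hlogc : Real.log c = Real.log qs - Real.log pa :=
      Real.log_div (ne_of_gt hqs) (ne_of_gt hpa)
    rw [← hlogc]
    have h1 : qs - c * pa ≤ ∫ ω in S, (1 - c * F ω) ∂Q := by
      rw [hL]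
      have := mul_le_mul_of_nonneg_left hFval (le_of_lt hcpos)
      linarith
    rw [hR] at hmono
    nlinarith [hmono, h1, hcp]

private lemma entropy_event_bound {Ω : Type*} [MeasurableSpace Ω]
    (P Q : Measure Ω) (hP : IsProbabilityMeasure P) (hQ : IsProbabilityMeasure Q)
    (hQP : Q ≪ P) (hint : Integrable (fun ω => Real.log ((Q.rnDeriv P ω).toReal)) Q)
    (A : Set Ω) (hA : MeasurableSet A) (hhalf : (1 / 2 : ℝ) ≤ (Q A).toReal) :
    -((∫ ω, Real.log ((Q.rnDeriv P ω).toReal) ∂Q) + Real.log 2) / (Q A).toReal ≤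
      Real.log ((P A).toReal) := by
  have hintl : Integrable (llr Q P) Q := hint
  set qa := (Q A).toReal with hqa'
  set qc := (Q Aᶜ).toReal with hqc'
  set pa := (P A).toReal with hpa'
  set pc := (P Aᶜ).toReal with hpc'
  have hqa : (0:ℝ) < qa := lt_of_lt_of_le (by norm_num) hhalf
  have hqc0 : (0:ℝ) ≤ qc := ENNReal.toReal_nonneg
  have h1 := jensen_llr P Q hQP hintl hA
  have h2 := jensen_llr P Q hQP hintl hA.compl
  have hsum : (∫ ω in A, llr Q P ω ∂Q) + ∫ ω in Aᶜ, llr Q P ω ∂Q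
      = ∫ ω, llr Q P ω ∂Q := integral_add_compl hA hintl
  have hqsum : qa + qc = 1 := by
    have h := measure_add_measure_compl (μ := Q) hA
    rw [measure_univ] at h
    rw [hqa', hqc', ← ENNReal.toReal_add (measure_ne_top Q A) (measure_ne_top Q Aᶜ), h]
    simp
  -- binary entropy bound
  have hb : -Real.log 2 ≤ qa * Real.log qa + qc * Real.log qc := by
    have ha1 := aux_log2 hqa.le
    have ha2 := aux_log2 hqc0
    have hl2 : qa * Real.log 2 + qc * Real.log 2 = Real.log 2 := by
      calc qa * Real.log 2 + qc * Real.log 2 = (qa + qc) * Real.log 2 := by ring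
        _ = 1 * Real.log 2 := by rw [hqsum]
        _ = Real.log 2 := one_mul _
    linarith
  have hpc1 : pc ≤ 1 := by
    rw [hpc']
    exact ENNReal.toReal_le_of_le_ofReal one_pos.le (by simpa using prob_le_one (μ := P) (s := Aᶜ))
  have hpcle : Real.log pc ≤ 0 := Real.log_nonpos ENNReal.toReal_nonneg hpc1
  have hqpc : qc * Real.log pc ≤ 0 := mul_nonpos_iff.mpr (Or.inl ⟨hqc0, hpcle⟩)
  have h1' : qa * Real.log qa - qa * Real.log pa ≤ ∫ ω in A, llr Q P ω ∂Q := by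
    rw [← mul_sub]; exact h1
  have h2' : qc * Real.log qc - qc * Real.log pc ≤ ∫ ω in Aᶜ, llr Q P ω ∂Q := by
    rw [← mul_sub]; exact h2
  have hEnt : (∫ ω, Real.log ((Q.rnDeriv P ω).toReal) ∂Q) = ∫ ω, llr Q P ω ∂Q := rfl
  rw [hEnt, div_le_iff₀ hqa]
  linarith

theorem stmt17 {Ω : Type*} [MeasurableSpace Ω] :
    (∀ (P Q : Measure Ω), IsProbabilityMeasure P → IsProbabilityMeasure Q →
      Q ≪ P →
      Integrable (fun ω => Real.log ((Q.rnDeriv P ω).toReal)) Q →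
      ∀ A : Set Ω, MeasurableSet A → (1 / 2 : ℝ) ≤ (Q A).toReal →
        -((∫ ω, Real.log ((Q.rnDeriv P ω).toReal) ∂Q) + Real.log 2) / (Q A).toReal ≤
          Real.log ((P A).toReal)) ∧
    (∀ (P Q : ℕ → Measure Ω) (A : ℕ → Set Ω),
      (∀ n, IsProbabilityMeasure (P n)) → (∀ n, IsProbabilityMeasure (Q n)) →
      (∀ n, Q n ≪ P n) →
      (∀ n, Integrable (fun ω => Real.log (((Q n).rnDeriv (P n) ω).toReal)) (Q n)) →
      (∀ n, MeasurableSet (A n)) →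
      Tendsto (fun n => ((Q n) (A n)).toReal) atTop (nhds 1) →
      -(limsup (fun n : ℕ =>
          (((1 / (n : ℝ)) *
            ∫ ω, Real.log (((Q n).rnDeriv (P n) ω).toReal) ∂(Q n) : ℝ) : EReal)) atTop) ≤
        liminf (fun n : ℕ =>
          (((1 / (n : ℝ)) * Real.log (((P n) (A n)).toReal) : ℝ) : EReal)) atTop) := by
  constructor
  · intro P Q hP hQ hQP hint A hA hhalf
    haveI := hP; haveI := hQ
    exact entropy_event_bound P Q hP hQ hQP hint A hA hhalf
  · intro P Q A hP hQ hQP hint hA htend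
    set E : ℕ → ℝ := fun n => ∫ ω, Real.log (((Q n).rnDeriv (P n) ω).toReal) ∂(Q n) with hE
    set q : ℕ → ℝ := fun n => ((Q n) (A n)).toReal with hq
    rw [EReal.neg_le]
    refine EReal.le_of_forall_lt_iff_le.1 (fun M hM => ?_)
    rw [EReal.neg_le, ← EReal.coe_neg]
    -- goal : ((-M : ℝ) : EReal) ≤ liminf ...
    have hev1' := eventually_lt_of_limsup_lt hM
    have hev1 : ∀ᶠ n : ℕ in atTop, (1 / (n : ℝ)) * E n < M := by
      filter_upwards [hev1'] with n hn
      exact_mod_cast hn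
    have hev2 : ∀ᶠ n in atTop, (1/2 : ℝ) ≤ q n :=
      htend.eventually (eventually_ge_nhds (by norm_num))
    set r : ℕ → ℝ := fun n => -(M + (1/(n:ℝ)) * Real.log 2) / q n with hr
    have hrlim : Tendsto r atTop (nhds (-M)) := by
      have h1n : Tendsto (fun n : ℕ => 1/(n:ℝ)) atTop (nhds 0) :=
        tendsto_one_div_atTop_nhds_zero_nat
      have hnum : Tendsto (fun n : ℕ => -(M + (1/(n:ℝ)) * Real.log 2)) atTop
          (nhds (-(M + 0 * Real.log 2))) :=
        (tendsto_const_nhds.add (h1n.mul_const _)).neg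
      have h2' : Tendsto r atTop (nhds (-(M + 0 * Real.log 2)/1)) :=
        hnum.div htend one_ne_zero
      have heq : (-(M + 0 * Real.log 2)/1) = -M := by norm_num
      rwa [heq] at h2'
    have hyr : ∀ᶠ n in atTop,
        r n ≤ (1 / (n : ℝ)) * Real.log (((P n) (A n)).toReal) := by
      filter_upwards [hev1, hev2, eventually_gt_atTop 0] with n h1 h2 h3
      have hn : (0:ℝ) < n := by exact_mod_cast h3
      have hqn : (0:ℝ) < q n := lt_of_lt_of_le (by norm_num) h2
      have hbase := entropy_event_bound (P n) (Q n) (hP n) (hQ n) (hQP n) (hint n)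
        (A n) (hA n) h2
      have hscaled := mul_le_mul_of_nonneg_left hbase (le_of_lt (one_div_pos.2 hn))
      refine le_trans ?_ hscaled
      have hrw : (1:ℝ) / ↑n * (-(E n + Real.log 2) / q n)
          = (1 / ↑n * -(E n + Real.log 2)) / q n := by ring
      show -(M + (1/(n:ℝ)) * Real.log 2) / q n
          ≤ 1/(n:ℝ) * (-(E n + Real.log 2) / q n)
      rw [hrw, div_le_div_iff_of_pos_right hqn]
      nlinarith [h1, Real.log_pos (by norm_num : (1:ℝ) < 2)]
    calc ((-M : ℝ) : EReal)
        = liminf (fun n => ((r n : ℝ) : EReal)) atTop :=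
          ((EReal.tendsto_coe.mpr hrlim).liminf_eq).symm
      _ ≤ liminf (fun n : ℕ =>
            (((1 / (n : ℝ)) * Real.log (((P n) (A n)).toReal) : ℝ) : EReal)) atTop :=
          liminf_le_liminf (hyr.mono fun n h => EReal.coe_le_coe_iff.mpr h)
end
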